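/- Let m and n be non-negative integers. Then Σ_{k=1}^{m} C(n+k−2, k−1)·C(n−1, k−1)·C(m+n, m−k) = Σ_{k=0}^{m} k·C(m+n−k−1, n−1)^2. -/

import Mathlib

/-- Binomial coefficient `C(a, b)` for integers `a`, `b`, with the convention
`C(a, b) = 0` when `b < 0` or `b > a`. -/
def ichoose (a b : ℤ) : ℤ :=
  if 0 ≤ b ∧ b ≤ a then (a.toNat.choose b.toNat : ℤ) else 0

open Finset

lemma ichoose_natCast (a b : ℕ) : ichoose a b = (a.choose b : ℤ) := by
  unfold ichoose
  split
  · simp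
  · next h =>
    have hba : a < b := by omega
    rw [Nat.choose_eq_zero_of_lt hba]; simp

/-- Trinomial revision specialized form. -/
lemma trinom (N M j : ℕ) (hj : j ≤ M) :
    (N + j).choose j * ((N + M).choose (M - j)) = (N + M).choose N * M.choose j := by
  have h1 : (N + M).choose (M - j) = (N + M).choose (N + j) := by
    have : N + M - (M - j) = N + j := by omega
    rw [← this, Nat.choose_symm (by omega)]
  have h2 : (N + j).choose j = (N + j).choose N := by
    rw [Nat.add_comm N j]; exact Nat.choose_symm_add
  rw [h1, h2, mul_comm]
  have := Nat.choose_mul (n := N + M) (k := N + j) (s := N) (by omega)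
  simpa using this

/-- Vandermonde in range form. -/
lemma vandermonde_range (N M : ℕ) :
    ∑ j ∈ range (M + 1), N.choose j * M.choose j = (N + M).choose M := by
  rw [Nat.add_choose_eq, Finset.Nat.sum_antidiagonal_eq_sum_range_succ
    (fun a b => N.choose a * M.choose b)]
  refine Finset.sum_congr rfl fun j hj => ?_
  rw [Finset.mem_range] at hj
  rw [Nat.choose_symm (by omega)]

/-- Lemma A: `∑ C(N+j,j) C(N,j) C(N+M, M-j) = C(N+M,M)^2`. -/
lemma lemA (N M : ℕ) :
    ∑ j ∈ range (M + 1), (N + j).choose j * N.choose j * (N + M).choose (M - j)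
      = ((N + M).choose M) ^ 2 := by
  have : ∀ j ∈ range (M + 1),
      (N + j).choose j * N.choose j * (N + M).choose (M - j)
        = (N + M).choose N * (N.choose j * M.choose j) := by
    intro j hj
    rw [Finset.mem_range] at hj
    have := trinom N M j (by omega)
    calc (N + j).choose j * N.choose j * (N + M).choose (M - j)
        = N.choose j * ((N + j).choose j * (N + M).choose (M - j)) := by ring
      _ = N.choose j * ((N + M).choose N * M.choose j) := by rw [this]
      _ = (N + M).choose N * (N.choose j * M.choose j) := by ring
  rw [Finset.sum_congr rfl this, ← Finset.mul_sum, vandermonde_range,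
    Nat.choose_symm_add, sq]

/-- Lemma B. -/
lemma lemB (N M : ℕ) :
    ∑ j ∈ range (M + 1), (N + j).choose j * N.choose j * (N + M + 1).choose (M - j)
      = ∑ i ∈ range (M + 1), ((N + i).choose i) ^ 2 := by
  induction M with
  | zero => simp
  | succ M ih =>
    rw [Finset.sum_range_succ (f := fun j =>
      (N + j).choose j * N.choose j * (N + (M+1) + 1).choose (M + 1 - j))]
    have split : ∀ j ∈ range (M + 1),
        (N + j).choose j * N.choose j * (N + (M + 1) + 1).choose (M + 1 - j)
          = (N + j).choose j * N.choose j * (N + M + 1).choose (M - j)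
            + (N + j).choose j * N.choose j * (N + M + 1).choose (M + 1 - j) := by
      intro j hj
      rw [Finset.mem_range] at hj
      have h1 : M + 1 - j = (M - j) + 1 := by omega
      have h2 : N + (M + 1) + 1 = (N + M + 1) + 1 := by ring
      rw [h1, h2, Nat.choose_succ_succ']
      ring
    rw [Finset.sum_congr rfl split, Finset.sum_add_distrib, ih]
    have hA : ∑ j ∈ range (M + 1), (N + j).choose j * N.choose j
          * (N + M + 1).choose (M + 1 - j)
        + (N + (M + 1)).choose (M + 1) * N.choose (M + 1)
          * (N + (M + 1) + 1).choose (M + 1 - (M + 1))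
        = ((N + (M + 1)).choose (M + 1)) ^ 2 := by
      have := lemA N (M + 1)
      rw [Finset.sum_range_succ] at this
      rw [← this]
      simp [Nat.add_assoc]
    have e2 := Finset.sum_range_succ (fun i => ((N + i).choose i) ^ 2) (M + 1)
    omega

lemma ichoose_of_neg {a b : ℤ} (h : b < 0) : ichoose a b = 0 := by
  unfold ichoose; rw [if_neg]; rintro ⟨h1, _⟩; omega

/-- Lemma C: the main identity in `ℕ` form (with reflected right-hand side). -/
lemma lemC (N m : ℕ) :
    ∑ j ∈ range m, (N + j).choose j * N.choose j * (N + m + 1).choose (m - 1 - j)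
      = ∑ i ∈ range (m + 1), (m - i) * ((N + i).choose i) ^ 2 := by
  induction m with
  | zero => simp
  | succ m ih =>
    rw [Finset.sum_range_succ (f := fun j =>
      (N + j).choose j * N.choose j * (N + (m + 1) + 1).choose (m + 1 - 1 - j))]
    have split : ∀ j ∈ range m,
        (N + j).choose j * N.choose j * (N + (m + 1) + 1).choose (m + 1 - 1 - j)
          = (N + j).choose j * N.choose j * (N + m + 1).choose (m - 1 - j)
            + (N + j).choose j * N.choose j * (N + m + 1).choose (m - j) := by
      intro j hj
      rw [Finset.mem_range] at hj
      have h1 : m + 1 - 1 - j = (m - 1 - j) + 1 := by omega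
      have h2 : N + (m + 1) + 1 = (N + m + 1) + 1 := by ring
      have h3 : m - j = (m - 1 - j) + 1 := by omega
      rw [h1, h2, h3, Nat.choose_succ_succ]
      ring
    rw [Finset.sum_congr rfl split, Finset.sum_add_distrib, ih]
    have hpeel : (N + (m + 1) + 1).choose (m + 1 - 1 - m) = (N + m + 1).choose (m - m) := by
      have e1 : m + 1 - 1 - m = 0 := by omega
      have e2 : m - m = 0 := by omega
      rw [e1, e2, Nat.choose_zero_right, Nat.choose_zero_right]
    rw [hpeel]
    have hb := lemB N m
    rw [Finset.sum_range_succ] at hb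
    have hRHS : ∑ i ∈ range (m + 1 + 1), (m + 1 - i) * ((N + i).choose i) ^ 2
        = ∑ i ∈ range (m + 1), (m - i) * ((N + i).choose i) ^ 2
          + ∑ i ∈ range (m + 1), ((N + i).choose i) ^ 2 := by
      rw [Finset.sum_range_succ (f := fun i => (m + 1 - i) * ((N + i).choose i) ^ 2)]
      have : ∀ i ∈ range (m + 1),
          (m + 1 - i) * ((N + i).choose i) ^ 2
            = (m - i) * ((N + i).choose i) ^ 2 + ((N + i).choose i) ^ 2 := by
        intro i hi
        rw [Finset.mem_range] at hi
        have : m + 1 - i = (m - i) + 1 := by omega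
        rw [this]; ring
      rw [Finset.sum_congr rfl this, Finset.sum_add_distrib]
      have : m + 1 - (m + 1) = 0 := by omega
      rw [this]
      ring
    rw [hRHS]
    omega

/-- Lemma D: reflection of the right-hand side. -/
lemma lemD (N m : ℕ) :
    ∑ k ∈ range (m + 1), k * ((m + N - k).choose N) ^ 2
      = ∑ i ∈ range (m + 1), (m - i) * ((N + i).choose i) ^ 2 := by
  rw [← Finset.sum_range_reflect (fun k => k * ((m + N - k).choose N) ^ 2) (m + 1)]
  refine Finset.sum_congr rfl fun i hi => ?_
  rw [Finset.mem_range] at hi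
  have h1 : m + 1 - 1 - i = m - i := by omega
  have h2 : m + N - (m - i) = N + i := by omega
  simp only [h1, h2]
  rw [Nat.choose_symm_add]

/-- Theorem 1.3 of the paper. -/
theorem stmt3 (m n : ℕ) :
    ∑ k ∈ Finset.Icc 1 m, ichoose ((n : ℤ) + k - 2) ((k : ℤ) - 1) *
        ichoose ((n : ℤ) - 1) ((k : ℤ) - 1) * ichoose ((m : ℤ) + n) ((m : ℤ) - k) =
      ∑ k ∈ Finset.range (m + 1), (k : ℤ) *
        ichoose ((m : ℤ) + n - k - 1) ((n : ℤ) - 1) ^ 2 := by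
  rcases n with _ | N
  · rw [Finset.sum_eq_zero, Finset.sum_eq_zero]
    · intro k hk
      rw [ichoose_of_neg (show ((0 : ℕ) : ℤ) - 1 < 0 by simp)]
      ring
    · intro k hk
      rw [Finset.mem_Icc] at hk
      have h01 : ichoose (((0 : ℕ) : ℤ) - 1) ((k : ℤ) - 1) = 0 := by
        unfold ichoose
        rw [if_neg]
        rintro ⟨h1, h2⟩
        simp only [Nat.cast_zero] at h2
        have : (1 : ℤ) ≤ (k : ℤ) := by exact_mod_cast hk.1
        omega
      rw [h01]
      ring
  · -- n = N + 1
    have hL : ∑ k ∈ Finset.Icc 1 m, ichoose (((N + 1 : ℕ) : ℤ) + k - 2) ((k : ℤ) - 1) *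
          ichoose (((N + 1 : ℕ) : ℤ) - 1) ((k : ℤ) - 1) * ichoose ((m : ℤ) + (N + 1 : ℕ)) ((m : ℤ) - k)
        = ((∑ j ∈ range m, (N + j).choose j * N.choose j * (N + m + 1).choose (m - 1 - j) : ℕ) : ℤ) := by
      rw [← Finset.Ico_add_one_right_eq_Icc, Finset.sum_Ico_eq_sum_range]
      simp only [Nat.add_sub_cancel]
      rw [Nat.cast_sum]
      refine Finset.sum_congr rfl fun j hj => ?_
      rw [Finset.mem_range] at hj
      have a1 : (((N + 1 : ℕ)) : ℤ) + ((1 + j : ℕ) : ℤ) - 2 = ((N + j : ℕ) : ℤ) := by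
        push_cast; ring
      have a2 : (((1 + j : ℕ)) : ℤ) - 1 = ((j : ℕ) : ℤ) := by push_cast; ring
      have a3 : (((N + 1 : ℕ)) : ℤ) - 1 = ((N : ℕ) : ℤ) := by push_cast; ring
      have a4 : ((m : ℕ) : ℤ) - ((1 + j : ℕ) : ℤ) = ((m - 1 - j : ℕ) : ℤ) := by
        push_cast; omega
      have a5 : ((m : ℕ) : ℤ) + (((N + 1 : ℕ)) : ℤ) = ((N + m + 1 : ℕ) : ℤ) := by
        push_cast; ring
      rw [a1, a2, a3, a4, a5, ichoose_natCast, ichoose_natCast, ichoose_natCast]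
      push_cast; ring
    have hR : ∑ k ∈ Finset.range (m + 1), (k : ℤ) *
          ichoose ((m : ℤ) + (N + 1 : ℕ) - k - 1) (((N + 1 : ℕ) : ℤ) - 1) ^ 2
        = ((∑ k ∈ range (m + 1), k * ((m + N - k).choose N) ^ 2 : ℕ) : ℤ) := by
      rw [Nat.cast_sum]
      refine Finset.sum_congr rfl fun k hk => ?_
      rw [Finset.mem_range] at hk
      have b1 : ((m : ℕ) : ℤ) + (((N + 1 : ℕ)) : ℤ) - (k : ℤ) - 1 = ((m + N - k : ℕ) : ℤ) := by
        push_cast; omega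
      have b2 : (((N + 1 : ℕ)) : ℤ) - 1 = ((N : ℕ) : ℤ) := by push_cast; ring
      rw [b1, b2, ichoose_natCast]
      push_cast; ring
    rw [hL, hR]
    exact_mod_cast (lemC N m).trans (lemD N m).symm
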